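/- For every n ≥ 0, α^{n+1}/(γ·(n+1)^β) ≤ D_n ≤ gcd(2,s)·α^n. -/

import Mathlib

open Finset

/-- `α = ∏_{p prime, p ∣ s} p^(1/(p-1))`. -/
noncomputable def alphaS (s : ℤ) : ℝ :=
  ∏ p ∈ s.natAbs.primeFactors, (p : ℝ) ^ ((1 : ℝ) / ((p : ℝ) - 1))

/-- `β` = number of odd primes dividing `s`. -/
def betaS (s : ℤ) : ℕ := (s.natAbs.primeFactors.erase 2).card

/-- `γ` = product of the odd primes dividing `s`. -/
def gammaS (s : ℤ) : ℕ := ∏ p ∈ s.natAbs.primeFactors.erase 2, p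

/-- `r_2(n) = n + 1`, and `r_p(n) = v_p((n+1)!)` for odd primes `p`. -/
def rP (p n : ℕ) : ℕ :=
  if p = 2 then n + 1 else ((n + 1).factorial.factorization p)

/-- `D_n = ∏_{p prime, p ∣ s} p^{r_p(n)}`. -/
def Dn (s : ℤ) (n : ℕ) : ℕ := ∏ p ∈ s.natAbs.primeFactors, p ^ rP p n

open Nat in
private lemma oddp_facts (p n : ℕ) (hp : p.Prime) (h2 : p ≠ 2) :
    (p:ℝ) ^ (((n:ℝ)+1)/((p:ℝ)-1)) ≤
      (p:ℝ) ^ ((n+1).factorial.factorization p) * ((p:ℝ) * ((n:ℝ)+1)) ∧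
    (p:ℝ) ^ ((n+1).factorial.factorization p) ≤ (p:ℝ) ^ ((n:ℝ)/((p:ℝ)-1)) := by
  haveI : Fact p.Prime := ⟨hp⟩
  have hp2 : 2 < p := lt_of_le_of_ne hp.two_le (Ne.symm h2)
  have hpR : (2:ℝ) < (p:ℝ) := by exact_mod_cast hp2
  have hp0 : (0:ℝ) < p := by linarith
  have hp1 : (1:ℝ) < p := by linarith
  have hd : (0:ℝ) < (p:ℝ) - 1 := by linarith
  set N := n + 1 with hN
  set v := (N).factorial.factorization p with hv
  set S := (p.digits N).sum with hS
  set L := (p.digits N).length with hL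
  have hNne : N ≠ 0 := Nat.succ_ne_zero n
  have hleg : (p - 1) * v = N - S := by
    rw [hv, Nat.factorization_def _ hp]; exact sub_one_mul_padicValNat_factorial N
  have hSN : S ≤ N := Nat.digit_sum_le p N
  have hS1 : 1 ≤ S := by
    have hne : p.digits N ≠ [] := Nat.digits_ne_nil_iff_ne_zero.mpr hNne
    have hlast := Nat.getLast_digit_ne_zero p hNne
    have hmem : (p.digits N).getLast hne ∈ p.digits N := List.getLast_mem hne
    have : 1 ≤ (p.digits N).getLast hne := Nat.one_le_iff_ne_zero.mpr hlast
    calc 1 ≤ (p.digits N).getLast hne := this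
    _ ≤ S := List.single_le_sum (fun x _ => Nat.zero_le x) _ hmem
  have hlegR : ((p:ℝ) - 1) * v = (N:ℝ) - S := by
    have h := congrArg (fun m : ℕ => (m : ℝ)) hleg
    simp only [Nat.cast_mul, Nat.cast_sub hSN, Nat.cast_sub hp.one_le, Nat.cast_one] at h
    exact h
  constructor
  · -- lower bound part
    have hSL : (S:ℝ) ≤ ((p:ℝ) - 1) * L := by
      have : S ≤ (p - 1) * L := by
        have := List.sum_le_card_nsmul (p.digits N) (p - 1)
          (fun x hx => Nat.le_sub_one_of_lt (Nat.digits_lt_base hp.one_lt hx))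
        simpa [smul_eq_mul, mul_comm] using this
      calc (S:ℝ) ≤ ((p - 1 : ℕ) : ℝ) * L := by exact_mod_cast this
      _ = ((p:ℝ) - 1) * L := by
          rw [Nat.cast_sub hp.one_le]; norm_num
    have hexp : ((N:ℝ))/((p:ℝ)-1) = (v:ℝ) + (S:ℝ)/((p:ℝ)-1) := by
      field_simp
      linarith [hlegR]
    have h1 : (p:ℝ) ^ (((n:ℝ)+1)/((p:ℝ)-1)) = (p:ℝ) ^ (v:ℝ) * (p:ℝ) ^ ((S:ℝ)/((p:ℝ)-1)) := by
      rw [← Real.rpow_add hp0]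
      congr 1
      push_cast
      rw [← hexp]
      push_cast
      rw [hN]; push_cast
      ring_nf
    have h2' : (p:ℝ) ^ ((S:ℝ)/((p:ℝ)-1)) ≤ (p:ℝ) ^ (L:ℝ) := by
      apply Real.rpow_le_rpow_of_exponent_le (le_of_lt hp1)
      rw [div_le_iff₀ hd]
      linarith [hSL]
    have h3 : (p:ℝ) ^ (L:ℝ) ≤ (p:ℝ) * N := by
      have := Nat.base_pow_length_digits_le p N hp.one_lt hNne
      calc (p:ℝ) ^ (L:ℝ) = ((p ^ L : ℕ) : ℝ) := by
            rw [Real.rpow_natCast]; push_cast; ring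
      _ ≤ ((p * N : ℕ) : ℝ) := by exact_mod_cast this
      _ = (p:ℝ) * N := by push_cast; ring
    calc (p:ℝ) ^ (((n:ℝ)+1)/((p:ℝ)-1)) = (p:ℝ) ^ (v:ℝ) * (p:ℝ) ^ ((S:ℝ)/((p:ℝ)-1)) := h1
    _ ≤ (p:ℝ) ^ (v:ℝ) * ((p:ℝ) * N) := by
        apply mul_le_mul_of_nonneg_left _ (Real.rpow_nonneg (le_of_lt hp0) _)
        exact le_trans h2' h3
    _ = (p:ℝ) ^ v * ((p:ℝ) * ((n:ℝ)+1)) := by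
        rw [Real.rpow_natCast, hN]; push_cast; ring
  · -- upper bound part
    have hvle : (v:ℝ) ≤ (n:ℝ)/((p:ℝ)-1) := by
      rw [le_div_iff₀ hd]
      have : ((p:ℝ)-1) * v ≤ (N:ℝ) - 1 := by
        rw [hlegR]
        have : (1:ℝ) ≤ S := by exact_mod_cast hS1
        linarith
      rw [hN] at this
      push_cast at this ⊢
      linarith
    calc (p:ℝ) ^ v = (p:ℝ) ^ (v:ℝ) := (Real.rpow_natCast _ _).symm
    _ ≤ (p:ℝ) ^ ((n:ℝ)/((p:ℝ)-1)) := Real.rpow_le_rpow_of_exponent_le (le_of_lt hp1) hvle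

theorem Dn_bounds (s : ℤ) (hs : s ≠ 0) (n : ℕ) :
    alphaS s ^ (n + 1) / ((gammaS s : ℝ) * ((n : ℝ) + 1) ^ betaS s) ≤ (Dn s n : ℝ) ∧
    (Dn s n : ℝ) ≤ (Int.gcd 2 s : ℝ) * alphaS s ^ n := by
  set P := s.natAbs.primeFactors with hP
  have hprime : ∀ p ∈ P, p.Prime := fun p hp => Nat.prime_of_mem_primeFactors hp
  have hcast : ∀ p ∈ P, (1:ℝ) < (p:ℝ) := fun p hp => by
    exact_mod_cast (hprime p hp).one_lt
  have alpha_pow : ∀ k : ℕ, alphaS s ^ k = ∏ p ∈ P, (p:ℝ) ^ ((k:ℝ)/((p:ℝ)-1)) := by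
    intro k
    rw [alphaS, ← Finset.prod_pow]
    refine Finset.prod_congr rfl fun p hp => ?_
    rw [← Real.rpow_natCast ((p:ℝ) ^ ((1:ℝ)/((p:ℝ)-1))) k,
      ← Real.rpow_mul (Nat.cast_nonneg p)]
    congr 1
    ring
  have hDn : (Dn s n : ℝ) = ∏ p ∈ P, (p:ℝ) ^ (rP p n) := by
    rw [Dn]; push_cast; rfl
  constructor
  · -- lower bound
    have hγ : 0 < gammaS s :=
      Finset.prod_pos fun p hp => (hprime p (mem_of_mem_erase hp)).pos
    have hden : (0:ℝ) < (gammaS s : ℝ) * ((n:ℝ)+1) ^ betaS s := by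
      have : (0:ℝ) < (gammaS s : ℝ) := by exact_mod_cast hγ
      positivity
    rw [div_le_iff₀ hden]
    have hrhs : (Dn s n : ℝ) * ((gammaS s : ℝ) * ((n:ℝ)+1) ^ betaS s) =
        ∏ p ∈ P, ((p:ℝ) ^ (rP p n) * (if p = 2 then 1 else (p:ℝ) * ((n:ℝ)+1))) := by
      rw [Finset.prod_mul_distrib, ← hDn]
      congr 1
      have h1 : ∏ p ∈ P, (if p = 2 then (1:ℝ) else (p:ℝ) * ((n:ℝ)+1)) =
          ∏ p ∈ P.erase 2, (if p = 2 then (1:ℝ) else (p:ℝ) * ((n:ℝ)+1)) :=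
        (Finset.prod_erase P (by simp)).symm
      rw [h1]
      rw [Finset.prod_congr rfl (fun p hp => if_neg (Finset.ne_of_mem_erase hp)),
        Finset.prod_mul_distrib, Finset.prod_const]
      rw [gammaS, betaS]
      push_cast
      rfl
    rw [hrhs, alpha_pow]
    apply Finset.prod_le_prod
    · intro p hp
      exact Real.rpow_nonneg (Nat.cast_nonneg p) _
    · intro p hp
      by_cases h : p = 2
      · subst h
        rw [if_pos rfl, mul_one, rP, if_pos rfl]
        apply le_of_eq
        push_cast
        rw [show ((2:ℝ)-1) = 1 by norm_num, div_one, ← Real.rpow_natCast 2 (n+1)]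
        push_cast
        ring_nf
      · rw [rP, if_neg h, if_neg h]
        have := (oddp_facts p n (hprime p hp) h).1
        calc (p:ℝ) ^ ((↑(n+1):ℝ)/((p:ℝ)-1)) = (p:ℝ) ^ (((n:ℝ)+1)/((p:ℝ)-1)) := by push_cast; ring_nf
        _ ≤ _ := this
  · -- upper bound
    have hub : ∀ p ∈ P, (p:ℝ) ^ (rP p n) ≤
        (if p = 2 then (2:ℝ) else 1) * (p:ℝ) ^ ((n:ℝ)/((p:ℝ)-1)) := by
      intro p hp
      by_cases h : p = 2
      · subst h
        rw [if_pos rfl, rP, if_pos rfl]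
        apply le_of_eq
        norm_num
        ring
      · rw [if_neg h, rP, if_neg h, one_mul]
        exact (oddp_facts p n (hprime p hp) h).2
    have hgcd : (Int.gcd 2 s : ℝ) = ∏ p ∈ P, (if p = 2 then (2:ℝ) else 1) := by
      rw [Finset.prod_ite_eq' P 2 (fun _ => (2:ℝ))]
      have h2P : 2 ∈ P ↔ 2 ∣ s.natAbs := by
        simp [hP, Nat.mem_primeFactors, Nat.prime_two, Int.natAbs_ne_zero, hs]
      have : Int.gcd 2 s = Nat.gcd 2 s.natAbs := rfl
      rw [this]
      by_cases h : 2 ∣ s.natAbs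
      · rw [if_pos (h2P.mpr h), Nat.gcd_eq_left h]; norm_num
      · rw [if_neg (fun hc => h (h2P.mp hc)),
          (Nat.Prime.coprime_iff_not_dvd Nat.prime_two).mpr h]
        norm_num
    rw [hDn, hgcd, alpha_pow, ← Finset.prod_mul_distrib]
    apply Finset.prod_le_prod
    · intro p hp; positivity
    · exact hub
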